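/- Let h ∈ ℂ with h ∉ 2πi·ℚ and q := exp(h). For ℓ₀ ∈ ℂ, the following are equivalent: (i) q^{4ℓ₀+2k} ≠ 1 for all k ∈ ℤ; (ii) for all ℓ₁, ℓ₂ ∈ ℓ₀ + ℤ with ℓ₁ ≠ ℓ₂ one has [ℓ₁]² + q^{ℓ₁+1}[ℓ₁] ≠ [ℓ₂]² + q^{ℓ₂+1}[ℓ₂]. Here q^b := exp(h·b) and [b] := (q^b − q^{−b})/(q − q^{−1}). -/

import Mathlib

open Complex

/-- `q^b := exp(h·b)`. -/
noncomputable def qpow (h b : ℂ) : ℂ := Complex.exp (h * b)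

/-- the q-number `[b] := (q^b − q^{−b})/(q − q^{−1})` where `q = exp h`. -/
noncomputable def qnum (h b : ℂ) : ℂ :=
  (Complex.exp (h * b) - Complex.exp (-(h * b))) / (Complex.exp h - Complex.exp (-h))

lemma key_aux (h : ℂ) (hh : ∀ r : ℚ, h ≠ 2 * Real.pi * Complex.I * r) :
    ∀ n : ℤ, n ≠ 0 → Complex.exp (h * n) ≠ 1 := by
  intro n hn he
  rw [Complex.exp_eq_one_iff] at he
  obtain ⟨m, hm⟩ := he
  apply hh (m / n)
  have hnC : (n : ℂ) ≠ 0 := Int.cast_ne_zero.mpr hn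
  field_simp at hm ⊢
  rw [Rat.cast_div, Rat.cast_intCast, Rat.cast_intCast, mul_div_assoc', eq_div_iff hnC]
  linear_combination hm

lemma alg_aux (a b c : ℂ) (ha : a ≠ 0) (hb : b ≠ 0) (hd : c - c⁻¹ ≠ 0) :
    (((a - a⁻¹)/(c - c⁻¹))^2 + a*c*((a - a⁻¹)/(c - c⁻¹)) =
     ((b - b⁻¹)/(c - c⁻¹))^2 + b*c*((b - b⁻¹)/(c - c⁻¹))) ↔
    (a^2 - b^2) * (c^2 * a^2 * b^2 - 1) = 0 := by
  have hc : c ≠ 0 := by intro h0; apply hd; simp [h0]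
  have hc2 : c^2 - 1 ≠ 0 := by
    intro h0; apply hd
    have : c * (c - c⁻¹) = c^2 - 1 := by field_simp
    have := this.trans h0
    rcases mul_eq_zero.mp this with h | h
    · exact absurd h hc
    · exact h
  rw [← sub_eq_zero]
  have key : ((a - a⁻¹)/(c - c⁻¹))^2 + a*c*((a - a⁻¹)/(c - c⁻¹)) -
      (((b - b⁻¹)/(c - c⁻¹))^2 + b*c*((b - b⁻¹)/(c - c⁻¹))) =
      (a^2 - b^2) * (c^2 * a^2 * b^2 - 1) / (a^2 * b^2 * (c - c⁻¹)^2) := by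
    have ea : a - a⁻¹ = (a^2 - 1)/a := by field_simp
    have eb : b - b⁻¹ = (b^2 - 1)/b := by field_simp
    have ec : c - c⁻¹ = (c^2 - 1)/c := by field_simp
    rw [ea, eb, ec]
    field_simp
    ring
  rw [key, div_eq_zero_iff]
  have hden : a^2 * b^2 * (c - c⁻¹)^2 ≠ 0 :=
    mul_ne_zero (mul_ne_zero (pow_ne_zero _ ha) (pow_ne_zero _ hb)) (pow_ne_zero _ hd)
  constructor
  · rintro (h | h)
    · exact h
    · exact absurd h hden
  · intro h; left; exact h

theorem stmt_5 (h : ℂ) (hh : ∀ r : ℚ, h ≠ 2 * Real.pi * Complex.I * r) (ℓ₀ : ℂ) :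
    (∀ k : ℤ, qpow h (4 * ℓ₀ + 2 * k) ≠ 1) ↔
      (∀ k₁ k₂ : ℤ, (ℓ₀ + k₁ : ℂ) ≠ (ℓ₀ + k₂ : ℂ) →
        (qnum h (ℓ₀ + k₁)) ^ 2 + qpow h (ℓ₀ + k₁ + 1) * qnum h (ℓ₀ + k₁) ≠
        (qnum h (ℓ₀ + k₂)) ^ 2 + qpow h (ℓ₀ + k₂ + 1) * qnum h (ℓ₀ + k₂)) := by
  have key := key_aux h hh
  have hd : Complex.exp h - Complex.exp (-h) ≠ 0 := by
    rw [sub_ne_zero]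
    intro he
    apply key 2 (by norm_num)
    have : Complex.exp (h * (2:ℤ)) = Complex.exp h * Complex.exp h := by
      rw [← Complex.exp_add]; norm_num; ring_nf
    rw [this]
    nth_rewrite 2 [he]
    rw [← Complex.exp_add, add_neg_cancel, Complex.exp_zero]
  have main : ∀ k₁ k₂ : ℤ, k₁ ≠ k₂ →
      (((qnum h (ℓ₀ + k₁)) ^ 2 + qpow h (ℓ₀ + k₁ + 1) * qnum h (ℓ₀ + k₁) =
        (qnum h (ℓ₀ + k₂)) ^ 2 + qpow h (ℓ₀ + k₂ + 1) * qnum h (ℓ₀ + k₂)) ↔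
       qpow h (4 * ℓ₀ + 2 * ((k₁ + k₂ + 1 : ℤ) : ℂ)) = 1) := by
    intro k₁ k₂ hk
    set a := Complex.exp (h * (ℓ₀ + k₁)) with ha_def
    set b := Complex.exp (h * (ℓ₀ + k₂)) with hb_def
    set c := Complex.exp h with hc_def
    have ha : a ≠ 0 := Complex.exp_ne_zero _
    have hb : b ≠ 0 := Complex.exp_ne_zero _
    have hd' : c - c⁻¹ ≠ 0 := by rwa [← Complex.exp_neg]
    have e1 : qnum h (ℓ₀ + k₁) = (a - a⁻¹) / (c - c⁻¹) := by
      rw [qnum, ← Complex.exp_neg, ← Complex.exp_neg]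
    have e2 : qnum h (ℓ₀ + k₂) = (b - b⁻¹) / (c - c⁻¹) := by
      rw [qnum, ← Complex.exp_neg, ← Complex.exp_neg]
    have e3 : qpow h (ℓ₀ + k₁ + 1) = a * c := by
      rw [qpow, ha_def, ← Complex.exp_add]; ring_nf
    have e4 : qpow h (ℓ₀ + k₂ + 1) = b * c := by
      rw [qpow, hb_def, ← Complex.exp_add]; ring_nf
    rw [e1, e2, e3, e4, alg_aux a b c ha hb hd']
    have hab : a ^ 2 - b ^ 2 ≠ 0 := by
      rw [sub_ne_zero]
      intro heq
      apply key (2 * (k₁ - k₂)) (by omega)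
      have : Complex.exp (h * ((2 * (k₁ - k₂) : ℤ) : ℂ)) = a ^ 2 / b ^ 2 := by
        rw [ha_def, hb_def, sq, sq, ← Complex.exp_add, ← Complex.exp_add,
          ← Complex.exp_sub]
        push_cast
        ring_nf
      rw [this, heq, div_self (pow_ne_zero _ hb)]
    have e5 : c ^ 2 * a ^ 2 * b ^ 2 = qpow h (4 * ℓ₀ + 2 * ((k₁ + k₂ + 1 : ℤ) : ℂ)) := by
      rw [ha_def, hb_def, hc_def, qpow, sq, sq, sq, ← Complex.exp_add, ← Complex.exp_add,
        ← Complex.exp_add, ← Complex.exp_add, ← Complex.exp_add]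
      push_cast
      ring_nf
    constructor
    · intro hz
      rcases mul_eq_zero.mp hz with hz | hz
      · exact absurd hz hab
      · rw [← e5]; linear_combination hz
    · intro hz
      rw [mul_eq_zero]
      right
      rw [e5]; linear_combination hz
  constructor
  · intro H k₁ k₂ hne heq
    have hk : k₁ ≠ k₂ := by
      intro e; exact hne (by rw [e])
    exact H (k₁ + k₂ + 1) ((main k₁ k₂ hk).mp heq)
  · intro H k hq1
    obtain ⟨k₁, k₂, hne, hsum⟩ : ∃ k₁ k₂ : ℤ, k₁ ≠ k₂ ∧ k₁ + k₂ + 1 = k := by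
      rcases eq_or_ne k (-1) with rfl | hk
      · exact ⟨1, -3, by norm_num, by norm_num⟩
      · exact ⟨k, -1, by omega, by ring⟩
    have hneC : (ℓ₀ + k₁ : ℂ) ≠ (ℓ₀ + k₂ : ℂ) := by
      intro e
      exact hne (by exact_mod_cast add_left_cancel e)
    apply H k₁ k₂ hneC
    rw [main k₁ k₂ hne, show ((k₁ + k₂ + 1 : ℤ) : ℂ) = (k : ℂ) by rw [hsum]]
    exact hq1
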